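/- If U₁ and U₂ are 2×2 unitaries with either [U₁,U₂] = 0 or {U₁,U₂} = 0, then the quantum-SWITCH output state (1/2)(|0⟩_c ⊗ {U₁,U₂}|ψ⟩ + |1⟩_c ⊗ [U₁,U₂]|ψ⟩) for a unit vector |ψ⟩ is a unit vector; measuring the control qubit yields outcome 0 with probability 1 in the commuting case and outcome 1 with probability 1 in the anti-commuting case. -/

import Mathlib

open Matrix Kronecker

noncomputable section

def X : Matrix (Fin 2) (Fin 2) ℂ := !![0, 1; 1, 0]
def Z : Matrix (Fin 2) (Fin 2) ℂ := !![1, 0; 0, -1]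
def D (f : Fin 2 → Fin 2) : Matrix (Fin 2) (Fin 2) ℂ :=
  Matrix.diagonal fun x => (-1 : ℂ) ^ (f x : ℕ)
def e (y : Fin 2) : Fin 2 → ℂ := Pi.single y 1
def e2 (p : Fin 2 × Fin 2) : Fin 2 × Fin 2 → ℂ := Pi.single p 1
def H2 : Matrix (Fin 2) (Fin 2) ℂ := (Real.sqrt 2 : ℂ)⁻¹ • !![1, 1; 1, -1]
/-- The oracle `U_f : |x⟩|y⟩ ↦ |x⟩|y ⊕ f(x)⟩`. -/
def Uf (f : Fin 2 → Fin 2) : Matrix (Fin 2 × Fin 2) (Fin 2 × Fin 2) ℂ :=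
  Matrix.of fun p q => if p.1 = q.1 ∧ p.2 = q.2 + f q.1 then 1 else 0
/-- Tensor product of a control vector and a target vector. -/
def tens (c t : Fin 2 → ℂ) : Fin 2 × Fin 2 → ℂ := fun p => c p.1 * t p.2


lemma norm_pres (U : Matrix (Fin 2) (Fin 2) ℂ) (hU : U ∈ Matrix.unitaryGroup (Fin 2) ℂ)
    (ψ : Fin 2 → ℂ) : ∑ i, ‖U.mulVec ψ i‖ ^ 2 = ∑ i, ‖ψ i‖ ^ 2 := by
  have h1 : Uᴴ * U = 1 := by
    have := hU.1; rwa [Matrix.star_eq_conjTranspose] at this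
  have key : star (U.mulVec ψ) ⬝ᵥ U.mulVec ψ = star ψ ⬝ᵥ ψ := by
    rw [Matrix.star_mulVec, Matrix.dotProduct_mulVec, Matrix.vecMul_vecMul, h1,
      Matrix.vecMul_one]
  have expand : ∀ v : Fin 2 → ℂ, ∑ i, ‖v i‖ ^ 2 = (star v ⬝ᵥ v).re := by
    intro v
    simp only [dotProduct, Pi.star_apply, Complex.star_def, Complex.re_sum]
    congr 1; funext i
    simp [← Complex.normSq_eq_conj_mul_self, Complex.normSq_eq_norm_sq,
      ← Complex.ofReal_pow]
  rw [expand, expand, key]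

lemma tens_sum (c v : Fin 2 → ℂ) (x : Fin 2) (hc : c = e x)
    (hv : ∑ i, ‖v i‖ ^ 2 = 1) :
    (∑ p : Fin 2 × Fin 2, ‖tens c v p‖ ^ 2 = 1) ∧ ∑ y : Fin 2, ‖tens c v (x, y)‖ ^ 2 = 1 := by
  subst hc
  constructor
  · rw [Fintype.sum_prod_type]
    fin_cases x <;>
      simp [tens, e, Fin.sum_univ_two, Pi.single_apply, ← hv]
  · fin_cases x <;> simp [tens, e, Fin.sum_univ_two, Pi.single_apply, ← hv]

/-- for unitary `U₁, U₂` which commute or anti-commute and a unit vector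
`ψ`, the SWITCH output `(1/2)(|0⟩_c⊗{U₁,U₂}ψ + |1⟩_c⊗[U₁,U₂]ψ)` is a unit vector, and the
control-qubit measurement gives outcome 0 (resp. 1) with probability 1 in the commuting
(resp. anti-commuting) case. -/
theorem stmt12 (U₁ U₂ : Matrix (Fin 2) (Fin 2) ℂ)
    (h₁ : U₁ ∈ Matrix.unitaryGroup (Fin 2) ℂ) (h₂ : U₂ ∈ Matrix.unitaryGroup (Fin 2) ℂ)
    (ψ : Fin 2 → ℂ) (hψ : ∑ i, ‖ψ i‖ ^ 2 = 1) :
    let out : Fin 2 × Fin 2 → ℂ := (1 / 2 : ℂ) •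
      (tens (e 0) ((U₁ * U₂ + U₂ * U₁).mulVec ψ) +
        tens (e 1) ((U₁ * U₂ - U₂ * U₁).mulVec ψ))
    (U₁ * U₂ = U₂ * U₁ →
      (∑ p : Fin 2 × Fin 2, ‖out p‖ ^ 2 = 1) ∧ ∑ y : Fin 2, ‖out (0, y)‖ ^ 2 = 1) ∧
    (U₁ * U₂ = -(U₂ * U₁) →
      (∑ p : Fin 2 × Fin 2, ‖out p‖ ^ 2 = 1) ∧ ∑ y : Fin 2, ‖out (1, y)‖ ^ 2 = 1) := by

  intro out
  have hU : U₁ * U₂ ∈ Matrix.unitaryGroup (Fin 2) ℂ := mul_mem h₁ h₂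
  have hv : ∑ i, ‖(U₁ * U₂).mulVec ψ i‖ ^ 2 = 1 := by rw [norm_pres _ hU, hψ]
  constructor
  · intro h
    have hout : out = tens (e 0) ((U₁ * U₂).mulVec ψ) := by
      funext p
      simp only [out, h, sub_self, Matrix.zero_mulVec, Pi.smul_apply, Pi.add_apply, tens,
        smul_eq_mul, Pi.zero_apply, mul_zero, add_zero, ← Matrix.add_mulVec]
      rw [← h]
      rw [show U₁ * U₂ + U₁ * U₂ = (2 : ℂ) • (U₁ * U₂) by module, Matrix.smul_mulVec]
      simp; ring
    rw [hout]
    exact tens_sum _ _ 0 rfl hv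
  · intro h
    have hout : out = tens (e 1) ((U₁ * U₂).mulVec ψ) := by
      funext p
      have hz : U₁ * U₂ + U₂ * U₁ = 0 := by rw [h]; abel
      simp only [out, hz, Matrix.zero_mulVec, Pi.smul_apply, Pi.add_apply, tens,
        smul_eq_mul, Pi.zero_apply, mul_zero, zero_add]
      have hs : U₁ * U₂ - U₂ * U₁ = (2 : ℂ) • (U₁ * U₂) := by rw [h]; module
      rw [hs, Matrix.smul_mulVec]
      simp; ring
    rw [hout]
    exact tens_sum _ _ 1 rfl hv
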